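/- Let G = P ⋊ K with P a finite p-group and K a p'-group acting faithfully on P. Let γ, δ be automorphisms of G and let x ∈ G. If Δ_γ(P) = {(γ(y),y) : y ∈ P} and Δ_δ(P) are conjugate in G × G, then δ ∘ γ⁻¹ agrees on P with an inner automorphism of G, and hence δ ∘ γ⁻¹ is inner. -/

import Mathlib

open scoped Pointwise

/-- Let `G = P ⋊ K` with `P` a finite `p`-group and `K` a `p'`-group acting
faithfully on `P`. Let `γ, δ` be automorphisms of `G`. If the twisted diagonals
`Δ_γ(P) = {(γ(y),y) : y ∈ P}` and `Δ_δ(P)` are conjugate in `G × G`, then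
`δ ∘ γ⁻¹` is an inner automorphism of `G`. -/
theorem conj_twisted_diagonal_inner {G : Type*} [Group G] [Finite G] (p : ℕ) [Fact p.Prime]
    (P K : Subgroup G) [P.Normal] (hPK : P ⊓ K = ⊥) (hsup : P ⊔ K = ⊤)
    (hP : IsPGroup p P) (hK : ¬ p ∣ Nat.card K)
    (hfaith : K ⊓ Subgroup.centralizer (P : Set G) = ⊥)
    (γ δ : G ≃* G)
    (hconj : ∃ c : G × G,
        P.map (δ.toMonoidHom.prod (MonoidHom.id G)) =
          Subgroup.map (MulAut.conj c).toMonoidHom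
            (P.map (γ.toMonoidHom.prod (MonoidHom.id G)))) :
    ∃ x : G, ∀ g : G, δ (γ.symm g) = x * g * x⁻¹ := by
  classical
  obtain ⟨⟨a, b⟩, hc⟩ := hconj
  have hp : p.Prime := Fact.out
  have hPnormal : P.Normal := inferInstance
  -- decomposition G = P * K
  have hdecomp : ∀ g : G, ∃ y ∈ P, ∃ k ∈ K, y * k = g := by
    intro g
    have hmem : g ∈ (P : Set G) * (K : Set G) := by
      rw [← Subgroup.normal_mul, hsup]
      exact Subgroup.mem_top g
    obtain ⟨y, hy, k, hk, hyk⟩ := hmem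
    exact ⟨y, hy, k, hk, hyk⟩
  have hcompl : Subgroup.IsComplement' P K := by
    apply Subgroup.isComplement'_of_disjoint_and_mul_eq_univ
    · exact disjoint_iff.mpr hPK
    · have h := Subgroup.normal_mul P K
      rw [hsup] at h
      rw [← h, Subgroup.coe_top]
  have hindex : P.index = Nat.card K := hcompl.symm.index_eq_card
  have hcopK : Nat.Coprime p (Nat.card K) := (Nat.Prime.coprime_iff_not_dvd hp).mpr hK
  -- p-power order elements lie in P
  have hmemP : ∀ g : G, (∃ n : ℕ, g ^ p ^ n = 1) → g ∈ P := by
    rintro g ⟨n, hg⟩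
    have h1 : orderOf ((QuotientGroup.mk' P) g) ∣ p ^ n :=
      (orderOf_map_dvd _ g).trans (orderOf_dvd_of_pow_eq_one hg)
    have h2 : orderOf ((QuotientGroup.mk' P) g) ∣ Nat.card K := by
      rw [← hindex, Subgroup.index_eq_card]
      exact orderOf_dvd_natCard _
    have h3 : orderOf ((QuotientGroup.mk' P) g) = 1 :=
      Nat.eq_one_of_dvd_one ((Nat.Coprime.pow_left n hcopK) ▸ Nat.dvd_gcd h1 h2)
    have h4 : (QuotientGroup.mk' P) g = 1 := orderOf_eq_one_iff.mp h3
    exact (QuotientGroup.eq_one_iff g).mp h4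
  have hordP : ∀ y : G, y ∈ P → ∃ n : ℕ, y ^ p ^ n = 1 := by
    intro y hy
    obtain ⟨n, hn⟩ := hP ⟨y, hy⟩
    refine ⟨n, ?_⟩
    have := congrArg (Subtype.val) hn
    simpa using this
  have hsymmP : ∀ v : G, v ∈ P → γ.symm v ∈ P := by
    intro v hv
    obtain ⟨n, hn⟩ := hordP v hv
    refine hmemP _ ⟨n, ?_⟩
    rw [← map_pow, hn, map_one]
  -- the centralizer of P
  set C := Subgroup.centralizer (P : Set G) with hCdef
  have hCleP : C ≤ P := by
    intro g hg
    obtain ⟨y, hy, k, hk, rfl⟩ := hdecomp g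
    have hcomm := Subgroup.mem_centralizer_iff.mp hg
    have hconjk : ∀ u : G, u ∈ P → k * u * k⁻¹ = y⁻¹ * u * y := by
      intro u hu
      calc k * u * k⁻¹ = y⁻¹ * (y * k * u) * k⁻¹ := by group
        _ = y⁻¹ * (u * (y * k)) * k⁻¹ := by rw [← hcomm u hu]
        _ = y⁻¹ * u * y := by group
    have hconjy : (MulAut.conjNormal (k : G) : MulAut P) = MulAut.conjNormal (y⁻¹ : G) := by
      apply MulEquiv.ext
      intro u
      apply Subtype.ext
      rw [MulAut.conjNormal_apply, MulAut.conjNormal_apply, inv_inv]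
      exact hconjk u u.2
    have hordk : orderOf ((MulAut.conjNormal (k : G)) : MulAut P) ∣ Nat.card K :=
      (orderOf_map_dvd MulAut.conjNormal k).trans (Subgroup.orderOf_dvd_natCard K hk)
    obtain ⟨n, hn⟩ := hordP y hy
    have hordy : orderOf ((MulAut.conjNormal (k : G)) : MulAut P) ∣ p ^ n := by
      rw [hconjy]
      refine (orderOf_map_dvd MulAut.conjNormal y⁻¹).trans ?_
      rw [orderOf_inv]
      exact orderOf_dvd_of_pow_eq_one hn
    have h3 : orderOf ((MulAut.conjNormal (k : G)) : MulAut P) = 1 :=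
      Nat.eq_one_of_dvd_one (((Nat.Coprime.pow_left n hcopK).symm) ▸ Nat.dvd_gcd hordk hordy)
    have h4 : (MulAut.conjNormal (k : G) : MulAut P) = 1 := orderOf_eq_one_iff.mp h3
    have hkC : k ∈ C := by
      rw [hCdef, Subgroup.mem_centralizer_iff]
      intro u hu
      have := congrArg Subtype.val (MulEquiv.ext_iff.mp h4 ⟨u, hu⟩)
      rw [MulAut.conjNormal_apply] at this
      simp only [MulAut.one_apply] at this
      -- this : k * u * k⁻¹ = u
      calc u * k = (k * u * k⁻¹) * k := by rw [this]
        _ = k * u := by group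
    have hk1 : k = 1 := by
      have : k ∈ K ⊓ C := ⟨hk, hkC⟩
      rw [hfaith] at this
      exact this
    rw [hk1, mul_one]
    exact hy
  have hCcomm : ∀ c₁ c₂ : G, c₁ ∈ C → c₂ ∈ C → c₁ * c₂ = c₂ * c₁ := fun c₁ c₂ h1 h2 =>
    (Subgroup.mem_centralizer_iff.mp h2) c₁ (hCleP h1)
  have hCnormal : ∀ (g c : G), c ∈ C → g * c * g⁻¹ ∈ C := by
    intro g c hcC
    rw [hCdef, Subgroup.mem_centralizer_iff]
    intro u hu
    have hmem : g⁻¹ * u * g ∈ P := by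
      have := hPnormal.conj_mem u hu g⁻¹
      simpa using this
    have h1 : (g⁻¹ * u * g) * c = c * (g⁻¹ * u * g) :=
      Subgroup.mem_centralizer_iff.mp hcC _ hmem
    calc u * (g * c * g⁻¹) = g * ((g⁻¹ * u * g) * c) * g⁻¹ := by group
      _ = g * (c * (g⁻¹ * u * g)) * g⁻¹ := by rw [h1]
      _ = (g * c * g⁻¹) * u := by group
  have hCp : IsPGroup p C := hP.to_le hCleP
  obtain ⟨mC, hmC⟩ := (IsPGroup.iff_card).mp hCp
  have hcopC : Nat.Coprime (Nat.card K) (Nat.card C) := by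
    rw [hmC]
    exact Nat.Coprime.pow_right mC (Nat.coprime_comm.mp hcopK)
  -- the automorphism θ
  let θ : G ≃* G := γ.symm.trans ((MulAut.conj b).trans (δ.trans (MulAut.conj a⁻¹)))
  have hθ : ∀ g : G, θ g = a⁻¹ * δ (b * γ.symm g * b⁻¹) * a := by
    intro g
    show a⁻¹ * δ (b * γ.symm g * b⁻¹) * a⁻¹⁻¹ = _
    rw [inv_inv]
  -- key consequence of the conjugacy of twisted diagonals
  have hkey : ∀ u : G, u ∈ P → ∃ v : G, v ∈ P ∧ δ u = a * γ v * a⁻¹ ∧ u = b * v * b⁻¹ := by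
    intro u hu
    have h1 : (δ u, u) ∈ P.map (δ.toMonoidHom.prod (MonoidHom.id G)) :=
      Subgroup.mem_map.mpr ⟨u, hu, rfl⟩
    rw [hc] at h1
    obtain ⟨z, hz, hz2⟩ := Subgroup.mem_map.mp h1
    obtain ⟨v, hv, rfl⟩ := Subgroup.mem_map.mp hz
    refine ⟨v, hv, ?_, ?_⟩
    · have := congrArg Prod.fst hz2
      simpa [MulAut.conj_apply, mul_assoc] using this.symm
    · have := congrArg Prod.snd hz2
      simpa [MulAut.conj_apply, mul_assoc] using this.symm
  have hθP : ∀ v : G, v ∈ P → θ v = v := by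
    intro v hv
    have hsv : γ.symm v ∈ P := hsymmP v hv
    have hu : b * γ.symm v * b⁻¹ ∈ P := hPnormal.conj_mem _ hsv b
    obtain ⟨v', hv', hdelta, hbw⟩ := hkey _ hu
    have hv'eq : v' = γ.symm v := by
      have h1 : b * γ.symm v * b⁻¹ = b * v' * b⁻¹ := hbw
      have h2 : γ.symm v = v' := by
        apply mul_left_cancel (a := b)
        apply mul_right_cancel (b := b⁻¹)
        exact h1
      exact h2.symm
    rw [hθ, hdelta, hv'eq, MulEquiv.apply_symm_apply]
    group
  have hfC : ∀ g : G, θ g * g⁻¹ ∈ C := by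
    intro g
    rw [hCdef, Subgroup.mem_centralizer_iff]
    intro u hu
    have hmem : g⁻¹ * u * g ∈ P := by
      have := hPnormal.conj_mem u hu g⁻¹
      simpa using this
    have h1 : θ (g⁻¹ * u * g) = g⁻¹ * u * g := hθP _ hmem
    have h2 : θ (g⁻¹ * u * g) = (θ g)⁻¹ * u * θ g := by
      rw [map_mul, map_mul, map_inv, hθP u hu]
    have h3 : (θ g)⁻¹ * u * θ g = g⁻¹ * u * g := h2.symm.trans h1
    calc u * (θ g * g⁻¹) = θ g * ((θ g)⁻¹ * u * θ g) * g⁻¹ := by group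
      _ = θ g * (g⁻¹ * u * g) * g⁻¹ := by rw [h3]
      _ = (θ g * g⁻¹) * u := by group
  -- the averaging argument over K with values in the abelian group C
  letI : Fintype K := Fintype.ofFinite _
  letI commC : CommGroup C :=
    { (inferInstance : Group C) with
      mul_comm := fun c₁ c₂ => Subtype.ext (hCcomm _ _ c₁.2 c₂.2) }
  let f : K → C := fun k => ⟨θ k * (k : G)⁻¹, hfC k⟩
  let φ : K → C →* C := fun k =>
    { toFun := fun c => ⟨(k : G) * c * (k : G)⁻¹, hCnormal _ _ c.2⟩
      map_one' := Subtype.ext (by simp)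
      map_mul' := fun c d => Subtype.ext (by
        show (k : G) * (↑c * ↑d) * (k : G)⁻¹ = ((k : G) * ↑c * (k : G)⁻¹) * ((k : G) * ↑d * (k : G)⁻¹)
        group) }
  set n := Nat.card K with hn
  set W : C := ∏ l : K, f l with hW
  have hcocycle : ∀ k l : K, f (k * l) = f k * φ k (f l) := by
    intro k l
    apply Subtype.ext
    show θ ((k : G) * l) * ((k : G) * l)⁻¹ =
      (θ k * (k : G)⁻¹) * ((k : G) * (θ l * (l : G)⁻¹) * (k : G)⁻¹)
    rw [map_mul]
    group
  have hWeq : ∀ k : K, W = f k ^ n * φ k W := by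
    intro k
    have h1 : ∏ l : K, f (k * l) = W := Equiv.prod_comp (Equiv.mulLeft k) f
    have h2 : ∏ l : K, f (k * l) = f k ^ n * φ k W := by
      simp_rw [hcocycle k]
      rw [Finset.prod_mul_distrib, Finset.prod_const, ← map_prod, ← hW,
        Finset.card_univ, ← Nat.card_eq_fintype_card, ← hn]
    exact h1.symm.trans h2
  set N := Nat.card C with hN
  have hNpos : 0 < N := Nat.card_pos
  set m := n ^ (Nat.totient N - 1) with hm
  have hnmN : n * m ≡ 1 [MOD N] := by
    have htot : 0 < Nat.totient N := Nat.totient_pos.mpr hNpos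
    have h2 : n * m = n ^ Nat.totient N := by
      rw [hm, ← pow_succ']
      congr 1
      omega
    rw [h2]
    exact Nat.ModEq.pow_totient hcopC
  have hnm : ∀ c : C, (c ^ n) ^ m = c := by
    intro c
    rw [← pow_mul]
    have h2 : n * m ≡ 1 [MOD orderOf c] := hnmN.of_dvd (orderOf_dvd_natCard c)
    calc c ^ (n * m) = c ^ 1 := pow_eq_pow_iff_modEq.mpr h2
      _ = c := pow_one c
  set w : C := W ^ m with hw
  have hfk : ∀ k : K, f k = w * (φ k w)⁻¹ := by
    intro k
    have h1 : f k ^ n = W * (φ k W)⁻¹ := eq_mul_inv_iff_mul_eq.mpr (hWeq k).symm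
    calc f k = (f k ^ n) ^ m := (hnm (f k)).symm
      _ = (W * (φ k W)⁻¹) ^ m := by rw [h1]
      _ = W ^ m * ((φ k W)⁻¹) ^ m := mul_pow _ _ _
      _ = w * (φ k w)⁻¹ := by rw [hw, inv_pow, ← map_pow]
  have hθK : ∀ k : G, k ∈ K → θ k = (w : G) * k * (w : G)⁻¹ := by
    intro k hk
    have h0 := congrArg Subtype.val (hfk ⟨k, hk⟩)
    have h1 : θ k * k⁻¹ = (w : G) * (k * (w : G) * k⁻¹)⁻¹ := h0
    calc θ k = (θ k * k⁻¹) * k := by group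
      _ = ((w : G) * (k * (w : G) * k⁻¹)⁻¹) * k := by rw [h1]
      _ = (w : G) * k * (w : G)⁻¹ := by group
  have hθall : ∀ g : G, θ g = (w : G) * g * (w : G)⁻¹ := by
    intro g
    obtain ⟨y, hy, k, hk, rfl⟩ := hdecomp g
    rw [map_mul, hθP y hy, hθK k hk]
    have hyw : y * (w : G) = (w : G) * y := Subgroup.mem_centralizer_iff.mp w.2 y hy
    calc y * ((w : G) * k * (w : G)⁻¹) = y * (w : G) * k * (w : G)⁻¹ := by group
      _ = (w : G) * y * k * (w : G)⁻¹ := by rw [hyw]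
      _ = (w : G) * (y * k) * (w : G)⁻¹ := by group
  refine ⟨(δ b)⁻¹ * a * (w : G), fun g => ?_⟩
  have h1 := hθall g
  rw [hθ g, map_mul, map_mul, map_inv] at h1
  have h2 : δ (γ.symm g) = (δ b)⁻¹ * (a * ((w : G) * g * (w : G)⁻¹) * a⁻¹) * δ b := by
    rw [← h1]
    group
  rw [h2]
  group
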